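/- As ϑ → 0⁺, the quantity m̃_μ(ϑ) := (1/(4πμ)) ∫_{ℝ³} (1/√((|p|² − μ)² + ϑ²) − 1/|p|²) dp satisfies m̃_μ(ϑ) = μ^{−1/2}(ln(μ/ϑ) − 2 + ln 8 + o(1)). -/

import Mathlib

open Real Filter MeasureTheory

noncomputable def mTilde (μ ϑ : ℝ) : ℝ :=
  (1 / (4 * Real.pi * μ)) *
    ∫ p : EuclideanSpace ℝ (Fin 3),
      (1 / Real.sqrt ((‖p‖ ^ 2 - μ) ^ 2 + ϑ ^ 2) - 1 / ‖p‖ ^ 2)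

open Set

namespace Stmt6Aux

/-- The scaled 1-D integrand. -/
noncomputable def fE (ε t : ℝ) : ℝ := t ^ 2 / Real.sqrt ((t ^ 2 - 1) ^ 2 + ε ^ 2) - 1

/-- The comparison term. -/
noncomputable def gE (ε t : ℝ) : ℝ := t / Real.sqrt ((t ^ 2 - 1) ^ 2 + ε ^ 2)

noncomputable def Fint (ε : ℝ) : ℝ := ∫ t in Ioi (0:ℝ), fE ε t

lemma sqrt_pos_of_eps {ε t : ℝ} (hε : 0 < ε) :
    0 < Real.sqrt ((t ^ 2 - 1) ^ 2 + ε ^ 2) := by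
  apply Real.sqrt_pos.2; positivity

lemma continuous_fE {ε : ℝ} (hε : 0 < ε) : Continuous (fE ε) := by
  apply Continuous.sub _ continuous_const
  exact (continuous_pow 2).div (by fun_prop) (fun t => (sqrt_pos_of_eps hε).ne')

lemma continuous_gE {ε : ℝ} (hε : 0 < ε) : Continuous (gE ε) :=
  continuous_id.div (by fun_prop) (fun t => (sqrt_pos_of_eps hε).ne')

lemma abs_sub_le {ε t : ℝ} : |t ^ 2 - 1| ≤ Real.sqrt ((t ^ 2 - 1) ^ 2 + ε ^ 2) := by
  rw [← Real.sqrt_sq_eq_abs]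
  exact Real.sqrt_le_sqrt (by nlinarith [sq_nonneg ε])

/-- Exact evaluation of the comparison integral. -/
lemma integral_gE {ε : ℝ} (hε : 0 < ε) :
    ∫ t in Ioc (0:ℝ) (Real.sqrt 2), gE ε t = Real.arsinh (1 / ε) := by
  have h02 : (0:ℝ) ≤ Real.sqrt 2 := Real.sqrt_nonneg 2
  rw [← intervalIntegral.integral_of_le h02]
  have hderiv : ∀ t ∈ Set.uIcc (0:ℝ) (Real.sqrt 2),
      HasDerivAt (fun t => Real.arsinh ((t ^ 2 - 1) / ε) / 2) (gE ε t) t := by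
    intro t _
    have hin : HasDerivAt (fun t : ℝ => (t ^ 2 - 1) / ε) (2 * t / ε) t := by
      have : HasDerivAt (fun t : ℝ => t ^ 2 - 1) (2 * t) t := by
        simpa using ((hasDerivAt_pow 2 t).sub_const 1)
      exact this.div_const ε
    have harsinh := (Real.hasDerivAt_arsinh ((t ^ 2 - 1) / ε)).comp t hin
    have := harsinh.div_const 2
    convert this using 1 <;> try rfl
    have hA : 0 < (t ^ 2 - 1) ^ 2 + ε ^ 2 := by positivity
    have h1 : 1 + ((t ^ 2 - 1) / ε) ^ 2 = ((t ^ 2 - 1) ^ 2 + ε ^ 2) / ε ^ 2 := by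
      field_simp
      ring
    have h2 : Real.sqrt (((t ^ 2 - 1) ^ 2 + ε ^ 2) / ε ^ 2)
        = Real.sqrt ((t ^ 2 - 1) ^ 2 + ε ^ 2) / ε := by
      rw [Real.sqrt_div hA.le, Real.sqrt_sq hε.le]
    rw [gE, h1, h2]
    have hs : Real.sqrt ((t ^ 2 - 1) ^ 2 + ε ^ 2) ≠ 0 := (sqrt_pos_of_eps hε).ne'
    field_simp
  have hint : IntervalIntegrable (gE ε) volume 0 (Real.sqrt 2) :=
    (continuous_gE hε).intervalIntegrable _ _
  rw [intervalIntegral.integral_eq_sub_of_hasDerivAt hderiv hint]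
  rw [Real.sq_sqrt (by norm_num : (2:ℝ) ≥ 0)]
  norm_num
  rw [show (-1 : ℝ) / ε = -(1/ε) by ring, Real.arsinh_neg]
  ring

/-- `arsinh(1/ε) + log ε → log 2`. -/
lemma tendsto_arsinh :
    Tendsto (fun ε : ℝ => Real.arsinh (1 / ε) + Real.log ε) (nhdsWithin 0 (Set.Ioi 0))
      (nhds (Real.log 2)) := by
  have hmain : Tendsto (fun ε : ℝ => Real.log (1 + Real.sqrt (1 + ε ^ 2)))
      (nhdsWithin 0 (Set.Ioi 0)) (nhds (Real.log 2)) := by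
    have hc : ContinuousAt (fun ε : ℝ => Real.log (1 + Real.sqrt (1 + ε ^ 2))) 0 := by
      apply ContinuousAt.log
      · fun_prop
      · norm_num
    have h0 : (fun ε : ℝ => Real.log (1 + Real.sqrt (1 + ε ^ 2))) 0 = Real.log 2 := by
      norm_num
    exact h0 ▸ hc.tendsto.mono_left nhdsWithin_le_nhds
  apply hmain.congr'
  filter_upwards [self_mem_nhdsWithin] with ε hε
  have hε' : (0:ℝ) < ε := hε
  have harsinh : Real.arsinh (1 / ε) = Real.log (1 / ε + Real.sqrt (1 + (1 / ε) ^ 2)) :=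
    (Real.log_exp _).symm.trans (congrArg Real.log (Real.exp_arsinh _))
  have hpos : 0 < 1 / ε + Real.sqrt (1 + (1 / ε) ^ 2) := by positivity
  rw [harsinh, ← Real.log_mul hpos.ne' hε'.ne']
  congr 1
  have h1 : ε * Real.sqrt (1 + (1 / ε) ^ 2) = Real.sqrt (1 + ε ^ 2) := by
    rw [← Real.sqrt_sq hε'.le, ← Real.sqrt_mul (sq_nonneg ε)]
    congr 1
    field_simp
    ring_nf
    simp only [Real.sqrt_sq hε'.le]; ring
  have : (1 / ε + Real.sqrt (1 + (1 / ε) ^ 2)) * ε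
      = 1 + ε * Real.sqrt (1 + (1 / ε) ^ 2) := by
    field_simp
  rw [this, h1]

lemma tendsto_pt {t : ℝ} (ht : t ^ 2 - 1 ≠ 0) (b : ℝ) :
    Tendsto (fun ε : ℝ => b / Real.sqrt ((t ^ 2 - 1) ^ 2 + ε ^ 2))
      (nhdsWithin 0 (Set.Ioi 0)) (nhds (b / |t ^ 2 - 1|)) := by
  have hc : ContinuousAt (fun ε : ℝ => Real.sqrt ((t ^ 2 - 1) ^ 2 + ε ^ 2)) 0 := by fun_prop
  have h0 : (fun ε : ℝ => Real.sqrt ((t ^ 2 - 1) ^ 2 + ε ^ 2)) 0 = |t ^ 2 - 1| := by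
    simp [Real.sqrt_sq_eq_abs]
  have hs : Tendsto (fun ε : ℝ => Real.sqrt ((t ^ 2 - 1) ^ 2 + ε ^ 2))
      (nhdsWithin 0 (Set.Ioi 0)) (nhds (|t ^ 2 - 1|)) :=
    h0 ▸ hc.tendsto.mono_left nhdsWithin_le_nhds
  exact tendsto_const_nhds.div hs (abs_ne_zero.2 ht)

lemma sq_gt_two {t : ℝ} (ht : Real.sqrt 2 < t) : 2 < t ^ 2 := by
  have h2 : Real.sqrt 2 ^ 2 = 2 := Real.sq_sqrt (by norm_num)
  nlinarith [Real.sqrt_nonneg 2]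

lemma fE_bound {ε t : ℝ} (hε : 0 < ε) (hε1 : ε < 1) (ht : Real.sqrt 2 < t) :
    |fE ε t| ≤ 2 / t ^ 2 := by
  have h2 : 2 < t ^ 2 := sq_gt_two ht
  have ht0 : 0 < t := lt_of_le_of_lt (Real.sqrt_nonneg 2) ht
  have hA : 0 < t ^ 2 - 1 := by nlinarith
  have hs := sqrt_pos_of_eps (t := t) hε
  have hsle : Real.sqrt ((t ^ 2 - 1) ^ 2 + ε ^ 2) ≤ t ^ 2 := by
    have h' : Real.sqrt ((t ^ 2 - 1) ^ 2 + ε ^ 2) ≤ Real.sqrt ((t ^ 2) ^ 2) :=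
      Real.sqrt_le_sqrt (by nlinarith)
    rwa [Real.sqrt_sq (by positivity : (0:ℝ) ≤ t ^ 2)] at h'
  have hsge : t ^ 2 - 1 ≤ Real.sqrt ((t ^ 2 - 1) ^ 2 + ε ^ 2) :=
    le_trans (le_abs_self _) abs_sub_le
  have hlow : (0:ℝ) ≤ fE ε t := by
    rw [fE, sub_nonneg]
    rw [le_div_iff₀ hs, one_mul]
    exact hsle
  have hupp : fE ε t ≤ 2 / t ^ 2 := by
    rw [fE]
    have h1 : t ^ 2 / Real.sqrt ((t ^ 2 - 1) ^ 2 + ε ^ 2) ≤ t ^ 2 / (t ^ 2 - 1) :=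
      div_le_div_of_nonneg_left (by positivity) hA hsge
    have h2' : t ^ 2 / (t ^ 2 - 1) - 1 = 1 / (t ^ 2 - 1) := by
      field_simp
      ring
    have h3 : 1 / (t ^ 2 - 1) ≤ 2 / t ^ 2 := by
      rw [div_le_div_iff₀ hA (by positivity)]
      nlinarith
    linarith
  rw [abs_of_nonneg hlow]
  exact hupp

lemma bound_int : IntegrableOn (fun t : ℝ => 2 / t ^ 2) (Ioi (Real.sqrt 2)) := by
  have h : IntegrableOn (fun t : ℝ => t ^ (-2 : ℝ)) (Ioi (Real.sqrt 2)) :=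
    integrableOn_Ioi_rpow_of_lt (by norm_num) (Real.sqrt_pos.2 (by norm_num))
  have h2 : IntegrableOn (fun t : ℝ => 2 * t ^ (-2 : ℝ)) (Ioi (Real.sqrt 2)) :=
    h.const_mul 2
  apply h2.congr_fun _ measurableSet_Ioi
  intro t ht
  have ht0 : 0 < t := lt_of_le_of_lt (Real.sqrt_nonneg 2) ht
  show 2 * t ^ (-2 : ℝ) = 2 / t ^ 2
  rw [show ((-2:ℝ)) = -((2:ℕ):ℝ) by norm_num, Real.rpow_neg ht0.le, Real.rpow_natCast]
  ring

lemma integral_inv_sq_sub_one :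
    ∫ t in Ioi (Real.sqrt 2), (t ^ 2 - 1)⁻¹ = Real.log (1 + Real.sqrt 2) := by
  have h2 : (1:ℝ) < Real.sqrt 2 := by
    have := sq_gt_two (t := 1.5) (by nlinarith [Real.sq_sqrt (show (0:ℝ) ≤ 2 by norm_num), Real.sqrt_nonneg 2])
    nlinarith [Real.sq_sqrt (show (0:ℝ) ≤ 2 by norm_num), Real.sqrt_nonneg 2]
  set φ : ℝ → ℝ := fun t => (Real.log (t - 1) - Real.log (t + 1)) / 2 with hφ
  have hderiv : ∀ x ∈ Ici (Real.sqrt 2), HasDerivAt φ ((x ^ 2 - 1)⁻¹) x := by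
    intro x hx
    have hx1 : 1 < x := lt_of_lt_of_le h2 hx
    have h1 : HasDerivAt (fun t : ℝ => Real.log (t - 1)) (x - 1)⁻¹ x := by
      have := (Real.hasDerivAt_log (by linarith : x - 1 ≠ 0)).comp x
        ((hasDerivAt_id x).sub_const 1)
      simpa [Function.comp_def] using this
    have h2' : HasDerivAt (fun t : ℝ => Real.log (t + 1)) (x + 1)⁻¹ x := by
      have := (Real.hasDerivAt_log (by linarith : x + 1 ≠ 0)).comp x
        ((hasDerivAt_id x).add_const 1)
      simpa [Function.comp_def] using this
    have := (h1.sub h2').div_const 2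
    convert this using 1 <;> try rfl
    have hn1 : x - 1 ≠ 0 := by linarith
    have hn2 : x + 1 ≠ 0 := by linarith
    have hn3 : x ^ 2 - 1 ≠ 0 := by nlinarith
    field_simp
    ring
  have hint : IntegrableOn (fun t : ℝ => (t ^ 2 - 1)⁻¹) (Ioi (Real.sqrt 2)) := by
    apply Integrable.mono' bound_int
    · apply ContinuousOn.aestronglyMeasurable _ measurableSet_Ioi
      apply ContinuousOn.inv₀ (by fun_prop)
      intro t ht
      have := sq_gt_two (mem_Ioi.1 ht)
      nlinarith
    · filter_upwards [ae_restrict_mem measurableSet_Ioi] with t ht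
      have h2t := sq_gt_two (mem_Ioi.1 ht)
      have hA : 0 < t ^ 2 - 1 := by nlinarith
      rw [Real.norm_eq_abs, abs_of_nonneg (by positivity)]
      rw [inv_eq_one_div, div_le_div_iff₀ hA (by positivity)]
      nlinarith
  have hlim : Tendsto φ atTop (nhds 0) := by
    have hratio : Tendsto (fun t : ℝ => (t - 1) / (t + 1)) atTop (nhds 1) := by
      have h0 : Tendsto (fun t : ℝ => 1 - 2 / (t + 1)) atTop (nhds 1) := by
        have : Tendsto (fun t : ℝ => 2 / (t + 1)) atTop (nhds 0) :=
          Tendsto.div_atTop tendsto_const_nhds (tendsto_atTop_add_const_right _ 1 tendsto_id)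
        simpa using tendsto_const_nhds.sub this
      apply h0.congr'
      filter_upwards [eventually_gt_atTop (1:ℝ)] with t ht
      field_simp
      ring
    have hlog : Tendsto (fun t : ℝ => Real.log ((t - 1) / (t + 1))) atTop (nhds 0) := by
      have := (Real.continuousAt_log (by norm_num : (1:ℝ) ≠ 0)).tendsto.comp hratio
      simpa [Function.comp_def] using this
    have : Tendsto (fun t : ℝ => Real.log ((t - 1) / (t + 1)) / 2) atTop (nhds 0) := by
      simpa using hlog.div_const 2
    apply this.congr'
    filter_upwards [eventually_gt_atTop (1:ℝ)] with t ht
    rw [hφ]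
    rw [Real.log_div (by linarith) (by linarith)]
  rw [MeasureTheory.integral_Ioi_of_hasDerivAt_of_tendsto' hderiv hint hlim]
  rw [hφ]
  have hmul : (Real.sqrt 2 - 1) * (Real.sqrt 2 + 1) = 1 := by
    nlinarith [Real.sq_sqrt (show (0:ℝ) ≤ 2 by norm_num)]
  have hlog1 : Real.log (Real.sqrt 2 - 1) + Real.log (Real.sqrt 2 + 1) = 0 := by
    rw [← Real.log_mul (by nlinarith) (by nlinarith), hmul, Real.log_one]
  have : Real.log (1 + Real.sqrt 2) = Real.log (Real.sqrt 2 + 1) := by rw [add_comm]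
  rw [this]
  linarith


lemma one_lt_sqrt2 : (1:ℝ) < Real.sqrt 2 := by
  rw [show (1:ℝ) = Real.sqrt 1 by simp]
  exact Real.sqrt_lt_sqrt (by norm_num) (by norm_num)

lemma ae_ne_one : ∀ᵐ t : ℝ, t ≠ (1:ℝ) := by
  rw [ae_iff]
  have h : {a : ℝ | ¬ a ≠ 1} = {1} := by ext a; simp
  rw [h]
  exact measure_singleton 1

lemma integral_limit1 :
    ∫ t in Ioc (0:ℝ) (Real.sqrt 2), ((t ^ 2 - t) / |t ^ 2 - 1| - 1)
      = 2 * Real.log 2 - 2 - Real.log (1 + Real.sqrt 2) := by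
  have h12 := one_lt_sqrt2
  set f : ℝ → ℝ := fun t => (t ^ 2 - t) / |t ^ 2 - 1| - 1 with hf
  -- piece on (0,1]
  have haeA : (fun t : ℝ => (1 + t)⁻¹ - 2) =ᵐ[volume.restrict (Ioc (0:ℝ) 1)] f := by
    filter_upwards [ae_restrict_mem measurableSet_Ioc, ae_restrict_of_ae ae_ne_one] with t ht hne
    have ht1 : t < 1 := lt_of_le_of_ne ht.2 hne
    have h0 : (0:ℝ) < t := ht.1
    have habs : |t ^ 2 - 1| = 1 - t ^ 2 := by
      rw [abs_of_neg (by nlinarith)]; ring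
    rw [hf]
    simp only
    rw [habs]
    have h1 : 1 - t ^ 2 ≠ 0 := by nlinarith
    have h2 : 1 + t ≠ 0 := by nlinarith
    field_simp
    ring
  have hintA : IntegrableOn (fun t : ℝ => (1 + t)⁻¹ - 2) (Ioc (0:ℝ) 1) := by
    have : ContinuousOn (fun t : ℝ => (1 + t)⁻¹ - 2) (Icc (0:ℝ) 1) := by
      apply ContinuousOn.sub _ continuousOn_const
      apply ContinuousOn.inv₀ (by fun_prop)
      intro t ht
      have := ht.1
      positivity
    exact (this.integrableOn_compact isCompact_Icc).mono_set Ioc_subset_Icc_self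
  have hvalA : ∫ t in Ioc (0:ℝ) 1, (1 + t)⁻¹ - 2 = Real.log 2 - 2 := by
    rw [← intervalIntegral.integral_of_le (by norm_num : (0:ℝ) ≤ 1)]
    have hderiv : ∀ t ∈ Set.uIcc (0:ℝ) 1,
        HasDerivAt (fun t => Real.log (1 + t) - 2 * t) ((1 + t)⁻¹ - 2) t := by
      intro t ht
      rw [Set.uIcc_of_le (by norm_num : (0:ℝ) ≤ 1)] at ht
      have hpos : 0 < 1 + t := by have := ht.1; linarith
      have h1 : HasDerivAt (fun t : ℝ => Real.log (1 + t)) (1 + t)⁻¹ t := by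
        have := (Real.hasDerivAt_log hpos.ne').comp t ((hasDerivAt_id t).const_add 1)
        simpa [Function.comp_def] using this
      have h2 : HasDerivAt (fun t : ℝ => 2 * t) 2 t := by
        simpa using (hasDerivAt_id t).const_mul 2
      simpa [Pi.sub_def] using h1.sub h2
    rw [intervalIntegral.integral_eq_sub_of_hasDerivAt hderiv]
    · norm_num
    · apply ContinuousOn.intervalIntegrable
      apply ContinuousOn.sub _ continuousOn_const
      apply ContinuousOn.inv₀ (by fun_prop)
      intro t ht
      rw [Set.uIcc_of_le (by norm_num : (0:ℝ) ≤ 1)] at ht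
      have := ht.1
      positivity
  -- piece on (1, √2]
  have haeB : (fun t : ℝ => -(1 + t)⁻¹) =ᵐ[volume.restrict (Ioc (1:ℝ) (Real.sqrt 2))] f := by
    filter_upwards [ae_restrict_mem measurableSet_Ioc] with t ht
    have ht1 : 1 < t := ht.1
    have habs : |t ^ 2 - 1| = t ^ 2 - 1 := abs_of_pos (by nlinarith)
    rw [hf]
    simp only
    rw [habs]
    have h1 : t ^ 2 - 1 ≠ 0 := by nlinarith
    have h2 : 1 + t ≠ 0 := by nlinarith
    field_simp
    ring
  have hintB : IntegrableOn (fun t : ℝ => -(1 + t)⁻¹) (Ioc (1:ℝ) (Real.sqrt 2)) := by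
    have : ContinuousOn (fun t : ℝ => -(1 + t)⁻¹) (Icc (1:ℝ) (Real.sqrt 2)) := by
      apply ContinuousOn.neg
      apply ContinuousOn.inv₀ (by fun_prop)
      intro t ht
      have := ht.1
      positivity
    exact (this.integrableOn_compact isCompact_Icc).mono_set Ioc_subset_Icc_self
  have hvalB : ∫ t in Ioc (1:ℝ) (Real.sqrt 2), -(1 + t)⁻¹
      = Real.log 2 - Real.log (1 + Real.sqrt 2) := by
    rw [← intervalIntegral.integral_of_le h12.le]
    have hderiv : ∀ t ∈ Set.uIcc (1:ℝ) (Real.sqrt 2),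
        HasDerivAt (fun t => -Real.log (1 + t)) (-(1 + t)⁻¹) t := by
      intro t ht
      rw [Set.uIcc_of_le h12.le] at ht
      have hpos : 0 < 1 + t := by have := ht.1; linarith
      have h1 : HasDerivAt (fun t : ℝ => Real.log (1 + t)) (1 + t)⁻¹ t := by
        have := (Real.hasDerivAt_log hpos.ne').comp t ((hasDerivAt_id t).const_add 1)
        simpa [Function.comp_def] using this
      simpa [Pi.neg_def] using h1.neg
    rw [intervalIntegral.integral_eq_sub_of_hasDerivAt hderiv]
    · norm_num
      ring
    · apply ContinuousOn.intervalIntegrable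
      apply ContinuousOn.neg
      apply ContinuousOn.inv₀ (by fun_prop)
      intro t ht
      rw [Set.uIcc_of_le h12.le] at ht
      have := ht.1
      positivity
  have hIA : ∫ t in Ioc (0:ℝ) 1, f t = Real.log 2 - 2 := by
    rw [← integral_congr_ae haeA, hvalA]
  have hIB : ∫ t in Ioc (1:ℝ) (Real.sqrt 2), f t
      = Real.log 2 - Real.log (1 + Real.sqrt 2) := by
    rw [← integral_congr_ae haeB, hvalB]
  have hsplit : ∫ t in Ioc (0:ℝ) (Real.sqrt 2), f t
      = (∫ t in Ioc (0:ℝ) 1, f t) + ∫ t in Ioc (1:ℝ) (Real.sqrt 2), f t := by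
    rw [← MeasureTheory.setIntegral_union (Set.Ioc_disjoint_Ioc_of_le le_rfl) measurableSet_Ioc
      (hintA.congr haeA) (hintB.congr haeB),
      Set.Ioc_union_Ioc_eq_Ioc (by norm_num : (0:ℝ) ≤ 1) h12.le]
  rw [hsplit, hIA, hIB]
  ring

/-- limit of the first piece -/
lemma tendsto_piece1 :
    Tendsto (fun ε : ℝ => ∫ t in Ioc (0:ℝ) (Real.sqrt 2), (fE ε t - gE ε t))
      (nhdsWithin 0 (Set.Ioi 0))
      (nhds (2 * Real.log 2 - 2 - Real.log (1 + Real.sqrt 2))) := by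
  rw [← integral_limit1]
  apply MeasureTheory.tendsto_integral_filter_of_dominated_convergence (fun _ => (2:ℝ))
  · filter_upwards [self_mem_nhdsWithin] with ε hε
    exact (((continuous_fE hε).sub (continuous_gE hε)).aestronglyMeasurable).restrict
  · filter_upwards [self_mem_nhdsWithin] with ε hε
    filter_upwards [ae_restrict_mem measurableSet_Ioc] with t ht
    have hε' : (0:ℝ) < ε := hε
    have hs := sqrt_pos_of_eps (t := t) hε'
    have hsplit : fE ε t - gE ε t
        = (t ^ 2 - t) / Real.sqrt ((t ^ 2 - 1) ^ 2 + ε ^ 2) - 1 := by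
      rw [fE, gE, sub_div]; ring
    have h1 : |t ^ 2 - t| ≤ |t ^ 2 - 1| := by
      rw [show t ^ 2 - t = t * (t - 1) by ring, show t ^ 2 - 1 = (t + 1) * (t - 1) by ring,
        abs_mul, abs_mul]
      apply mul_le_mul_of_nonneg_right _ (abs_nonneg _)
      rw [abs_of_pos ht.1, abs_of_pos (by linarith [ht.1] : (0:ℝ) < t + 1)]
      linarith
    have hq : |(t ^ 2 - t) / Real.sqrt ((t ^ 2 - 1) ^ 2 + ε ^ 2)| ≤ 1 := by
      rw [abs_div, abs_of_pos hs, div_le_one hs]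
      exact h1.trans abs_sub_le
    rw [hsplit, Real.norm_eq_abs]
    have := abs_le.1 hq
    rw [abs_le]
    constructor <;> linarith
  · exact integrableOn_const measure_Ioc_lt_top.ne
  · filter_upwards [ae_restrict_mem measurableSet_Ioc, ae_restrict_of_ae ae_ne_one]
      with t ht hne
    have hA : t ^ 2 - 1 ≠ 0 := by
      have h0 : (0:ℝ) < t := ht.1
      intro h
      have : (t - 1) * (t + 1) = 0 := by nlinarith
      rcases mul_eq_zero.1 this with h' | h'
      · exact hne (by linarith)
      · linarith
    have hlim := (tendsto_pt hA (t ^ 2 - t)).sub_const 1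
    apply hlim.congr
    intro ε
    rw [fE, gE, sub_div]
    ring


/-- limit of the tail piece -/
lemma tendsto_piece2 :
    Tendsto (fun ε : ℝ => ∫ t in Ioi (Real.sqrt 2), fE ε t)
      (nhdsWithin 0 (Set.Ioi 0)) (nhds (Real.log (1 + Real.sqrt 2))) := by
  rw [← integral_inv_sq_sub_one]
  apply MeasureTheory.tendsto_integral_filter_of_dominated_convergence (fun t => 2 / t ^ 2)
  · filter_upwards [self_mem_nhdsWithin] with ε hε
    exact ((continuous_fE hε).aestronglyMeasurable).restrict
  · filter_upwards [Ioo_mem_nhdsGT_of_mem (by norm_num : (0:ℝ) ∈ Ico 0 1)] with ε hε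
    filter_upwards [ae_restrict_mem measurableSet_Ioi] with t ht
    exact fE_bound hε.1 hε.2 (mem_Ioi.1 ht)
  · exact bound_int
  · filter_upwards [ae_restrict_mem measurableSet_Ioi] with t ht
    have h2t := sq_gt_two (mem_Ioi.1 ht)
    have hA : 0 < t ^ 2 - 1 := by nlinarith
    have hlim := (tendsto_pt hA.ne' (t ^ 2)).sub_const 1
    have : t ^ 2 / |t ^ 2 - 1| - 1 = (t ^ 2 - 1)⁻¹ := by
      rw [abs_of_pos hA]
      field_simp
      ring
    rw [this] at hlim
    exact hlim


lemma key : Tendsto (fun ε : ℝ => Fint ε + Real.log ε) (nhdsWithin 0 (Set.Ioi 0))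
    (nhds (Real.log 8 - 2)) := by
  have hsum := (tendsto_piece1.add tendsto_arsinh).add tendsto_piece2
  have hval : (2 * Real.log 2 - 2 - Real.log (1 + Real.sqrt 2) + Real.log 2)
      + Real.log (1 + Real.sqrt 2) = Real.log 8 - 2 := by
    have h8 : Real.log 8 = 3 * Real.log 2 := by
      rw [show (8:ℝ) = 2 ^ 3 by norm_num, Real.log_pow]
      push_cast
      ring
    rw [h8]
    ring
  rw [hval] at hsum
  apply hsum.congr'
  filter_upwards [Ioo_mem_nhdsGT_of_mem (by norm_num : (0:ℝ) ∈ Ico 0 1)] with ε hε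
  have hε0 : (0:ℝ) < ε := hε.1
  have hI1 : IntegrableOn (fE ε) (Ioc (0:ℝ) (Real.sqrt 2)) :=
    (continuous_fE hε0).integrableOn_Ioc
  have hI2 : IntegrableOn (gE ε) (Ioc (0:ℝ) (Real.sqrt 2)) :=
    (continuous_gE hε0).integrableOn_Ioc
  have hI3 : IntegrableOn (fE ε) (Ioi (Real.sqrt 2)) := by
    apply Integrable.mono' bound_int ((continuous_fE hε0).aestronglyMeasurable).restrict
    filter_upwards [ae_restrict_mem measurableSet_Ioi] with t ht
    exact fE_bound hε0 hε.2 (mem_Ioi.1 ht)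
  have hFint : Fint ε = (∫ t in Ioc (0:ℝ) (Real.sqrt 2), fE ε t)
      + ∫ t in Ioi (Real.sqrt 2), fE ε t := by
    rw [Fint, ← MeasureTheory.setIntegral_union (Set.Ioc_disjoint_Ioi le_rfl)
      measurableSet_Ioi hI1 hI3, Set.Ioc_union_Ioi_eq_Ioi (Real.sqrt_nonneg 2)]
  have hsub : ∫ t in Ioc (0:ℝ) (Real.sqrt 2), (fE ε t - gE ε t)
      = (∫ t in Ioc (0:ℝ) (Real.sqrt 2), fE ε t)
        - ∫ t in Ioc (0:ℝ) (Real.sqrt 2), gE ε t :=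
    MeasureTheory.integral_sub hI1 hI2
  rw [hFint, hsub, ← integral_gE hε0]
  ring

lemma mTilde_eq {μ ϑ : ℝ} (hμ : 0 < μ) (hϑ : 0 < ϑ) :
    mTilde μ ϑ = (Real.sqrt μ)⁻¹ * Fint (ϑ / μ) := by
  have hsμ : 0 < Real.sqrt μ := Real.sqrt_pos.2 hμ
  -- the radial formula
  have hradial := MeasureTheory.integral_fun_norm_addHaar
    (volume : Measure (EuclideanSpace ℝ (Fin 3)))
    (fun r : ℝ => 1 / Real.sqrt ((r ^ 2 - μ) ^ 2 + ϑ ^ 2) - 1 / r ^ 2)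
  simp only [finrank_euclideanSpace_fin] at hradial
  -- the volume of the unit ball
  have hG : Real.Gamma ((3:ℝ) / 2 + 1) = 3 / 4 * Real.sqrt π := by
    rw [Real.Gamma_add_one (by norm_num), show (3:ℝ)/2 = 1/2 + 1 by norm_num,
      Real.Gamma_add_one (by norm_num), Real.Gamma_one_half_eq]
    ring
  have hball : volume.real (Metric.ball (0 : EuclideanSpace ℝ (Fin 3)) 1)
      = 4 * π / 3 := by
    rw [measureReal_def, EuclideanSpace.volume_ball (Fin 3) 0 1]
    simp only [Fintype.card_fin]
    rw [ENNReal.ofReal_one, one_pow, one_mul]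
    rw [ENNReal.toReal_ofReal (by positivity)]
    rw [show ((3:ℕ):ℝ)/2 + 1 = (3:ℝ)/2 + 1 by norm_num, hG]
    have hsq : Real.sqrt π ^ 3 = π * Real.sqrt π := by
      rw [pow_succ, Real.sq_sqrt Real.pi_nonneg]
    rw [hsq]
    have hπ : Real.sqrt π ≠ 0 := (Real.sqrt_pos.2 Real.pi_pos).ne'
    field_simp
  -- simplify the 1-D integrand
  have hIoi : ∫ y in Ioi (0:ℝ), y ^ 2 •
        ((1 : ℝ) / Real.sqrt ((y ^ 2 - μ) ^ 2 + ϑ ^ 2) - 1 / y ^ 2)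
      = ∫ y in Ioi (0:ℝ), (y ^ 2 / Real.sqrt ((y ^ 2 - μ) ^ 2 + ϑ ^ 2) - 1) := by
    apply setIntegral_congr_fun measurableSet_Ioi
    intro y hy
    have hy0 : (0:ℝ) < y := hy
    have hs : 0 < Real.sqrt ((y ^ 2 - μ) ^ 2 + ϑ ^ 2) := Real.sqrt_pos.2 (by positivity)
    simp only [smul_eq_mul]
    field_simp
  -- substitution y = √μ · x
  have hg : ∀ x : ℝ,
      (Real.sqrt μ * x) ^ 2 / Real.sqrt (((Real.sqrt μ * x) ^ 2 - μ) ^ 2 + ϑ ^ 2) - 1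
        = fE (ϑ / μ) x := by
    intro x
    rw [fE]
    have h1 : (Real.sqrt μ * x) ^ 2 = μ * x ^ 2 := by
      rw [mul_pow, Real.sq_sqrt hμ.le]
    rw [h1]
    have h2 : (μ * x ^ 2 - μ) ^ 2 + ϑ ^ 2 = μ ^ 2 * ((x ^ 2 - 1) ^ 2 + (ϑ / μ) ^ 2) := by
      field_simp
    rw [h2, Real.sqrt_mul (sq_nonneg μ), Real.sqrt_sq hμ.le]
    have hB : 0 < Real.sqrt ((x ^ 2 - 1) ^ 2 + (ϑ / μ) ^ 2) :=
      sqrt_pos_of_eps (div_pos hϑ hμ)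
    field_simp
  have hsubst : ∫ y in Ioi (0:ℝ), (y ^ 2 / Real.sqrt ((y ^ 2 - μ) ^ 2 + ϑ ^ 2) - 1)
      = Real.sqrt μ * Fint (ϑ / μ) := by
    have h := MeasureTheory.integral_comp_mul_left_Ioi
      (fun y : ℝ => y ^ 2 / Real.sqrt ((y ^ 2 - μ) ^ 2 + ϑ ^ 2) - 1) 0 hsμ
    rw [mul_zero] at h
    simp only [hg, smul_eq_mul] at h
    rw [Fint, h, ← mul_assoc, mul_inv_cancel₀ hsμ.ne', one_mul]
  -- put everything together
  rw [hball, nsmul_eq_mul, smul_eq_mul, show (3:ℕ) - 1 = 2 by norm_num, hIoi, hsubst]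
    at hradial
  rw [mTilde, hradial]
  have hμ' : Real.sqrt μ * Real.sqrt μ = μ := Real.mul_self_sqrt hμ.le
  have hπ : Real.pi ≠ 0 := Real.pi_ne_zero
  field_simp
  linear_combination 3 * Fint (ϑ / μ) * hμ'


end Stmt6Aux

theorem stmt_6 (μ : ℝ) (hμ : 0 < μ) :
    Tendsto (fun ϑ : ℝ =>
        mTilde μ ϑ - (Real.sqrt μ)⁻¹ * (Real.log (μ / ϑ) - 2 + Real.log 8))
      (nhdsWithin 0 (Set.Ioi 0)) (nhds 0) := by
  have hcomp : Tendsto (fun ϑ : ℝ => ϑ / μ) (nhdsWithin 0 (Set.Ioi 0))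
      (nhdsWithin 0 (Set.Ioi 0)) := by
    apply tendsto_nhdsWithin_of_tendsto_nhds_of_eventually_within
    · have : Tendsto (fun ϑ : ℝ => ϑ / μ) (nhds 0) (nhds (0 / μ)) := (tendsto_id.div_const μ)
      simpa using this.mono_left nhdsWithin_le_nhds
    · filter_upwards [self_mem_nhdsWithin] with x hx
      exact div_pos hx hμ
  have h1 : Tendsto (fun ϑ : ℝ => Stmt6Aux.Fint (ϑ / μ) + Real.log (ϑ / μ))
      (nhdsWithin 0 (Set.Ioi 0)) (nhds (Real.log 8 - 2)) := Stmt6Aux.key.comp hcomp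
  have h2 : Tendsto (fun ϑ : ℝ => (Real.sqrt μ)⁻¹ *
      ((Stmt6Aux.Fint (ϑ / μ) + Real.log (ϑ / μ)) - (Real.log 8 - 2)))
      (nhdsWithin 0 (Set.Ioi 0)) (nhds 0) := by
    have := (h1.sub_const (Real.log 8 - 2)).const_mul (Real.sqrt μ)⁻¹
    simpa using this
  apply h2.congr'
  filter_upwards [self_mem_nhdsWithin] with ϑ hϑ
  have hϑ' : (0:ℝ) < ϑ := hϑ
  rw [Stmt6Aux.mTilde_eq hμ hϑ']
  have hlog : Real.log (μ / ϑ) = - Real.log (ϑ / μ) := by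
    rw [← Real.log_inv]
    congr 1
    field_simp
  rw [hlog]
  ring
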